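/- Let K be a field, let I be a linearly ordered set, and let ε : I → K be any function. On the free K-module with basis (e_i)_{i ∈ I}, define a bilinear product by e_i ∘ e_j = ε(j)·e_i if i > j, and e_i ∘ e_j = 0 if i ≤ j. Then this product is right-commutative, (x ∘ y) ∘ z = (x ∘ z) ∘ y, and satisfies the identity x ∘ ([y, z] ∘ w) − (x, y, z ∘ w) + (x, z, y ∘ w) = 0 for all elements x, y, z, w, where [a, b] = a ∘ b − b ∘ a and (a, b, c) = a ∘ (b ∘ c) − (a ∘ b) ∘ c. -/

import Mathlib

private lemma aux_smul {K M : Type*} [Field K] [AddCommGroup M] [Module K M]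
    {a b c d e : M} (r : K) (h : a - (b - c) + (d - e) = 0) :
    r • a - (r • b - r • c) + (r • d - r • e) = 0 := by
  have h2 := congrArg (r • ·) h
  simpa [smul_sub, smul_add] using h2

set_option maxHeartbeats 1000000 in
/-- On the free `K`-module with basis `(e_i)_{i ∈ I}` over a linearly
ordered index set `I`, the bilinear product determined by `e_i ∘ e_j = ε j • e_i` if
`i > j` and `e_i ∘ e_j = 0` if `i ≤ j` is right-commutative and satisfies the identity
`x ∘ ([y, z] ∘ w) − (x, y, z ∘ w) + (x, z, y ∘ w) = 0`. -/
theorem stmt_8 (K : Type*) [Field K] (I : Type*) [LinearOrder I] (ε : I → K)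
    (m : (I →₀ K) →ₗ[K] (I →₀ K) →ₗ[K] (I →₀ K))
    (hm : ∀ i j : I, m (Finsupp.single i 1) (Finsupp.single j 1) =
      if j < i then ε j • Finsupp.single i 1 else 0) :
    (∀ x y z : I →₀ K, m (m x y) z = m (m x z) y) ∧
    (∀ x y z w : I →₀ K,
      m x (m (m y z - m z y) w)
        - (m x (m y (m z w)) - m (m x y) (m z w))
        + (m x (m z (m y w)) - m (m x z) (m y w)) = 0) := by
  constructor
  · -- right commutativity
    have key : ∀ (i j k : I),
        m (m (Finsupp.single i (1:K)) (Finsupp.single j 1)) (Finsupp.single k 1)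
          = m (m (Finsupp.single i 1) (Finsupp.single k 1)) (Finsupp.single j 1) := by
      intro i j k
      by_cases hji : j < i <;> by_cases hki : k < i <;>
        simp only [hm, hji, hki, if_true, if_false, map_smul, LinearMap.smul_apply,
          map_zero, LinearMap.zero_apply, smul_zero] <;> module
    intro x y z
    induction x using Finsupp.induction_linear with
    | zero => simp
    | add f g hf hg =>
      simp only [map_add, LinearMap.add_apply]; rw [hf, hg]
    | single i a =>
      induction y using Finsupp.induction_linear with
      | zero => simp
      | add f g hf hg =>
        simp only [map_add, LinearMap.add_apply]; rw [hf, hg]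
      | single j b =>
        induction z using Finsupp.induction_linear with
        | zero => simp
        | add f g hf hg =>
          simp only [map_add, LinearMap.add_apply]; rw [hf, hg]
        | single k c =>
          rw [← Finsupp.smul_single_one i a, ← Finsupp.smul_single_one j b,
            ← Finsupp.smul_single_one k c]
          simp only [map_smul, LinearMap.smul_apply]
          rw [key i j k]
          module
  · -- the second identity
    have key : ∀ (i j k l : I),
        m (Finsupp.single i (1:K)) (m (m (Finsupp.single j 1) (Finsupp.single k 1)
            - m (Finsupp.single k 1) (Finsupp.single j 1)) (Finsupp.single l 1))
          - (m (Finsupp.single i 1) (m (Finsupp.single j 1)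
              (m (Finsupp.single k 1) (Finsupp.single l 1)))
            - m (m (Finsupp.single i 1) (Finsupp.single j 1))
              (m (Finsupp.single k 1) (Finsupp.single l 1)))
          + (m (Finsupp.single i 1) (m (Finsupp.single k 1)
              (m (Finsupp.single j 1) (Finsupp.single l 1)))
            - m (m (Finsupp.single i 1) (Finsupp.single k 1))
              (m (Finsupp.single j 1) (Finsupp.single l 1))) = 0 := by
      intro i j k l
      by_cases hji : j < i <;> by_cases hki : k < i <;> by_cases hkj : k < j <;>
        by_cases hjk : j < k <;> by_cases hlj : l < j <;> by_cases hlk : l < k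
      all_goals first
        | exact absurd (hkj.trans hjk) (lt_irrefl _)
        | exact absurd ((not_lt.mp hjk).trans_lt hji) hki
        | exact absurd ((not_lt.mp hkj).trans_lt hki) hji
        | exact absurd (hlj.trans_le (not_lt.mp hkj)) hlk
        | exact absurd (hlk.trans_le (not_lt.mp hjk)) hlj
        | (simp only [hm, hji, hki, hkj, hjk, hlj, hlk, if_true, if_false,
            map_smul, LinearMap.smul_apply, map_zero, LinearMap.zero_apply,
            smul_zero, map_sub, LinearMap.sub_apply, sub_zero, zero_sub,
            map_neg, LinearMap.neg_apply, smul_neg, neg_zero] <;> module)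
    intro x y z w
    induction x using Finsupp.induction_linear with
    | zero => simp
    | add f g hf hg =>
      simp only [map_add, map_sub, LinearMap.add_apply, LinearMap.sub_apply] at hf hg ⊢
      have h2 := congrArg₂ (· + ·) hf hg
      simp only [add_zero] at h2
      rw [← h2]; abel
    | single i a =>
      induction y using Finsupp.induction_linear with
      | zero => simp
      | add f g hf hg =>
        simp only [map_add, map_sub, LinearMap.add_apply, LinearMap.sub_apply] at hf hg ⊢
        have h2 := congrArg₂ (· + ·) hf hg
        simp only [add_zero] at h2
        rw [← h2]; abel
      | single j b =>
        induction z using Finsupp.induction_linear with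
        | zero => simp
        | add f g hf hg =>
          simp only [map_add, map_sub, LinearMap.add_apply, LinearMap.sub_apply] at hf hg ⊢
          have h2 := congrArg₂ (· + ·) hf hg
          simp only [add_zero] at h2
          rw [← h2]; abel
        | single k c =>
          induction w using Finsupp.induction_linear with
          | zero => simp
          | add f g hf hg =>
            simp only [map_add, map_sub, LinearMap.add_apply, LinearMap.sub_apply] at hf hg ⊢
            have h2 := congrArg₂ (· + ·) hf hg
            simp only [add_zero] at h2
            rw [← h2]; abel
          | single l d =>
            rw [← Finsupp.smul_single_one i a, ← Finsupp.smul_single_one j b,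
              ← Finsupp.smul_single_one k c, ← Finsupp.smul_single_one l d]
            have h0 := key i j k l
            simp only [map_smul, LinearMap.smul_apply, map_sub, LinearMap.sub_apply,
              smul_sub] at h0 ⊢
            have h1 := congrArg (fun v => (a * (b * (c * d))) • v) h0
            simp only [smul_zero] at h1
            rw [← h1]
            module
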